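/- Let s be complex with 0 ≤ Re(s) ≤ 1, B ≥ 1 a natural number, and 0 < x₀ ≤ x. Then the remainder bound satisfies R_B(x,x₀) ≤ (x/x₀ - 1)^B / B. -/

import Mathlib

open MeasureTheory Real intervalIntegral

noncomputable def R (B : ℕ) (x x₀ : ℝ) : ℝ :=
  (1 / (B.factorial : ℝ)) *
    ∫ u in x₀..x, (∫ y in Set.Ioi (1 : ℝ), Real.exp (-(u * y)) * y ^ B) * (x - u) ^ B

lemma inner_nonneg (B : ℕ) (u : ℝ) :
    0 ≤ ∫ y in Set.Ioi (1 : ℝ), Real.exp (-(u * y)) * y ^ B := by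
  apply setIntegral_nonneg measurableSet_Ioi
  intro y hy
  have : (0:ℝ) ≤ y := le_of_lt (lt_trans one_pos hy)
  positivity

lemma inner_le (B : ℕ) {u : ℝ} (hu : 0 < u) :
    ∫ y in Set.Ioi (1 : ℝ), Real.exp (-(u * y)) * y ^ B ≤ (B.factorial : ℝ) / u ^ (B + 1) := by
  have hint : IntegrableOn (fun y : ℝ => Real.exp (-(u * y)) * y ^ B) (Set.Ioi 0) := by
    have h := integrableOn_rpow_mul_exp_neg_mul_rpow (p := 1) (s := (B : ℝ)) (b := u)
      (by exact lt_of_lt_of_le (by norm_num) (Nat.cast_nonneg B)) one_pos hu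
    refine h.congr_fun (fun y hy => ?_) measurableSet_Ioi
    simp [Real.rpow_natCast, Real.rpow_one, mul_comm, neg_mul]
  have hmono : ∫ y in Set.Ioi (1 : ℝ), Real.exp (-(u * y)) * y ^ B
      ≤ ∫ y in Set.Ioi (0 : ℝ), Real.exp (-(u * y)) * y ^ B := by
    refine setIntegral_mono_set hint ?_ ?_
    · filter_upwards [ae_restrict_mem measurableSet_Ioi] with y hy
      have : (0:ℝ) < y := hy
      positivity
    · exact HasSubset.Subset.eventuallyLE (Set.Ioi_subset_Ioi (by norm_num))
  refine hmono.trans ?_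
  have hcalc : ∫ y in Set.Ioi (0 : ℝ), Real.exp (-(u * y)) * y ^ B
      = (1 / u) ^ ((B : ℝ) + 1) * Real.Gamma ((B : ℝ) + 1) := by
    rw [← Real.integral_rpow_mul_exp_neg_mul_Ioi (by positivity : (0:ℝ) < (B:ℝ) + 1) hu]
    refine setIntegral_congr_fun measurableSet_Ioi (fun y hy => ?_)
    rw [add_sub_cancel_right, Real.rpow_natCast, mul_comm]
  rw [hcalc, Real.Gamma_nat_eq_factorial]
  have : (1 / u : ℝ) ^ ((B : ℝ) + 1) = 1 / u ^ (B + 1) := by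
    rw [show ((B : ℝ) + 1) = ((B + 1 : ℕ) : ℝ) by push_cast; ring, Real.rpow_natCast]
    simp [div_pow]
  rw [this, one_div_mul_eq_div]

/-- For `0 ≤ Re s ≤ 1`, `B ≥ 1`, `0 < x₀ ≤ x`, the remainder bound satisfies
`R_B(x,x₀) ≤ (x/x₀ - 1)^B / B`. -/
theorem stmt_5 (s : ℂ) (hs0 : 0 ≤ s.re) (hs1 : s.re ≤ 1) (B : ℕ) (hB : 1 ≤ B)
    (x₀ x : ℝ) (hx₀ : 0 < x₀) (hx : x₀ ≤ x) :
    R B x x₀ ≤ (x / x₀ - 1) ^ B / (B : ℝ) := by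
  have hBf : (0:ℝ) < B.factorial := by exact_mod_cast B.factorial_pos
  have hBpos : (0:ℝ) < B := by exact_mod_cast hB
  have hxx : (0:ℝ) ≤ x - x₀ := sub_nonneg.2 hx
  set F := fun u : ℝ => ∫ y in Set.Ioi (1:ℝ), Real.exp (-(u*y)) * y^B with hFdef
  set g := fun u : ℝ => ((B.factorial : ℝ) * (x - x₀)^B) * u ^ (-(B+1 : ℕ) : ℤ) with hgdef
  have hcont : Continuous (fun p : ℝ × ℝ => Real.exp (-(p.1 * p.2)) * p.2 ^ B) := by fun_prop
  have hFmeas : StronglyMeasurable F :=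
    hcont.stronglyMeasurable.integral_prod_right' (ν := volume.restrict (Set.Ioi 1))
  have hgle : ∀ u ∈ Set.Icc x₀ x, F u * (x - u)^B ≤ g u := by
    intro u hu
    have hu0 : 0 < u := lt_of_lt_of_le hx₀ hu.1
    have h1 : F u ≤ (B.factorial : ℝ) / u ^ (B+1) := inner_le B hu0
    have h2 : (x - u)^B ≤ (x - x₀)^B :=
      pow_le_pow_left₀ (sub_nonneg.2 hu.2) (by linarith [hu.1]) B
    have h3 : (u : ℝ) ^ (-(B+1 : ℕ) : ℤ) = 1 / u ^ (B+1) := by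
      rw [zpow_neg, zpow_natCast, one_div]
    calc F u * (x - u)^B ≤ ((B.factorial : ℝ) / u ^ (B+1)) * (x - x₀)^B :=
          mul_le_mul h1 h2 (pow_nonneg (sub_nonneg.2 hu.2) B) (by positivity)
      _ = g u := by rw [hgdef]; simp only [h3]; ring
  have hf : IntervalIntegrable (fun u => F u * (x - u)^B) volume x₀ x := by
    rw [intervalIntegrable_iff_integrableOn_Ioc_of_le hx]
    refine Integrable.mono' (g := fun _ => ((B.factorial : ℝ) / x₀ ^ (B+1)) * (x - x₀)^B)
      (integrableOn_const measure_Ioc_lt_top.ne) ?_ ?_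
    · exact ((hFmeas.aestronglyMeasurable).mul
        ((continuous_const.sub continuous_id).pow B).aestronglyMeasurable).restrict
    · filter_upwards [ae_restrict_mem measurableSet_Ioc] with u hu
      have hu0 : 0 < u := lt_of_lt_of_le hx₀ hu.1.le
      have h0 : 0 ≤ F u := inner_nonneg B u
      have h4 : 0 ≤ (x - u)^B := pow_nonneg (sub_nonneg.2 hu.2) B
      rw [Real.norm_eq_abs, abs_of_nonneg (mul_nonneg h0 h4)]
      have h1 : F u ≤ (B.factorial : ℝ) / u ^ (B+1) := inner_le B hu0
      have h5 : (B.factorial : ℝ) / u ^ (B+1) ≤ (B.factorial : ℝ) / x₀ ^ (B+1) := by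
        apply div_le_div_of_nonneg_left hBf.le (by positivity)
        exact pow_le_pow_left₀ hx₀.le hu.1.le _
      have h2 : (x - u)^B ≤ (x - x₀)^B :=
        pow_le_pow_left₀ (sub_nonneg.2 hu.2) (by linarith [hu.1.le]) B
      exact mul_le_mul (h1.trans h5) h2 h4 (by positivity)
  have hgi : IntervalIntegrable g volume x₀ x := by
    apply ContinuousOn.intervalIntegrable
    apply continuousOn_const.mul
    apply ContinuousOn.zpow₀ continuousOn_id
    intro u hu
    rw [Set.uIcc_of_le hx] at hu
    exact Or.inl (ne_of_gt (lt_of_lt_of_le hx₀ hu.1))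
  have h1 : ∫ u in x₀..x, F u * (x - u)^B ≤ ∫ u in x₀..x, g u :=
    intervalIntegral.integral_mono_on hx hf hgi hgle
  have h2 : ∫ u in x₀..x, g u
      = ((B.factorial : ℝ) * (x - x₀)^B) * ((x ^ (-(B:ℤ)) - x₀ ^ (-(B:ℤ))) / (-(B:ℝ))) := by
    rw [hgdef, intervalIntegral.integral_const_mul, integral_zpow]
    · have e : (-((B+1:ℕ):ℤ)+1) = -(B:ℤ) := by push_cast; ring
      rw [e]
      push_cast
      ring
    · refine Or.inr ⟨by omega, ?_⟩
      rw [Set.uIcc_of_le hx]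
      intro h0
      exact absurd h0.1 (not_le.2 hx₀)
  have h3 : ((B.factorial : ℝ) * (x - x₀)^B) * ((x ^ (-(B:ℤ)) - x₀ ^ (-(B:ℤ))) / (-(B:ℝ)))
      ≤ (B.factorial : ℝ) * ((x / x₀ - 1) ^ B / B) := by
    have hxp : (0:ℝ) ≤ x ^ (-(B:ℤ)) := zpow_nonneg (by linarith) _
    have hkey : (x ^ (-(B:ℤ)) - x₀ ^ (-(B:ℤ))) / (-(B:ℝ)) ≤ x₀ ^ (-(B:ℤ)) / B := by
      rw [div_neg, ← neg_div, neg_sub]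
      gcongr
      linarith
    have heq : (x / x₀ - 1) ^ B = (x - x₀)^B * x₀ ^ (-(B:ℤ)) := by
      rw [zpow_neg, zpow_natCast,
        show x / x₀ - 1 = (x - x₀) / x₀ by rw [sub_div, div_self hx₀.ne'],
        div_pow, div_eq_mul_inv]
    rw [heq]
    calc ((B.factorial : ℝ) * (x - x₀)^B) * ((x ^ (-(B:ℤ)) - x₀ ^ (-(B:ℤ))) / (-(B:ℝ)))
        ≤ ((B.factorial : ℝ) * (x - x₀)^B) * (x₀ ^ (-(B:ℤ)) / B) :=
          mul_le_mul_of_nonneg_left hkey (by positivity)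
      _ = (B.factorial : ℝ) * ((x - x₀)^B * x₀ ^ (-(B:ℤ)) / B) := by ring
  rw [R]
  calc (1 / (B.factorial : ℝ)) * ∫ u in x₀..x, F u * (x - u)^B
      ≤ (1 / (B.factorial : ℝ)) * ((B.factorial : ℝ) * ((x / x₀ - 1) ^ B / B)) := by
        apply mul_le_mul_of_nonneg_left _ (by positivity)
        exact h1.trans (h2 ▸ h3)
    _ = (x / x₀ - 1) ^ B / B := by field_simp
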